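/- Let p be a prime and let K be a field with a nontrivial nonarchimedean multiplicative norm ‖·‖ : K → ℝ≥0. Let K° = {x ∈ K : ‖x‖ ≤ 1} and 𝔪 = {x ∈ K : ‖x‖ < 1}. Assume K is spherically complete (every chain of closed balls in K has nonempty intersection) and that there is a sequence (π_n)_{n≥0} in K° with 0 < ‖π_0‖ < 1, π_{n+1}^p = π_n for all n, and 𝔪 = ⋃_n π_n K°. Then every K°-linear map f : 𝔪 → K/𝔪 lifts to a K°-linear map g : 𝔪 → K, i.e. the composition of g with the quotient map K → K/𝔪 equals f. -/

import Mathlib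

set_option maxHeartbeats 1000000
set_option synthInstance.maxHeartbeats 400000



/-- The maximal ideal `𝔪 = {x ∈ K : ‖x‖ < 1}` of the valuation ring
`K° = {x ∈ K : ‖x‖ ≤ 1}`, regarded as a `K°`-submodule of `K`. -/
def maxIdealSubmodule {K : Type*} [Field K] (v : Valuation K NNReal) :
    Submodule v.integer K where
  carrier := {x : K | v x < 1}
  add_mem' := fun {a b} ha hb => lt_of_le_of_lt (v.map_add a b) (max_lt ha hb)
  zero_mem' := by simp
  smul_mem' := fun c x hx => by
    have hc : v (c : K) ≤ 1 := c.2
    have : v ((c : K) * x) < 1 := by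
      calc v ((c : K) * x) = v (c : K) * v x := v.map_mul _ _
        _ ≤ 1 * v x := by gcongr
        _ = v x := one_mul _
        _ < 1 := hx
    simpa [Subring.smul_def] using this

/-- `K` is spherically complete: every family of closed balls that is totally ordered by
inclusion has nonempty intersection. -/
def SphericallyComplete {K : Type*} [Field K] (v : Valuation K NNReal) : Prop :=
  ∀ 𝒞 : Set (Set K), (∀ B ∈ 𝒞, ∃ (c : K) (r : NNReal), B = {x : K | v (x - c) ≤ r}) →
    IsChain (· ⊆ ·) 𝒞 → (⋂₀ 𝒞).Nonempty

/-- Let `p` be a prime and `K` a spherically complete field with a nontrivial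
nonarchimedean multiplicative norm, with a compatible `p`-power root system of
pseudo-uniformizers generating `𝔪`.  Then every `K°`-linear map `f : 𝔪 → K/𝔪` lifts to a
`K°`-linear map `g : 𝔪 → K`. -/
theorem lift_hom_to_quotient (p : ℕ) (hp : p.Prime) (K : Type*) [Field K]
    (v : Valuation K NNReal) (hnt : ∃ x : K, x ≠ 0 ∧ v x ≠ 1)
    (hsc : SphericallyComplete v)
    (π : ℕ → K) (hπint : ∀ n, v (π n) ≤ 1)
    (hπ0 : 0 < v (π 0)) (hπ1 : v (π 0) < 1)
    (hπp : ∀ n, (π (n + 1)) ^ p = π n)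
    (hπm : ∀ x : K, v x < 1 ↔ ∃ n, ∃ a : K, v a ≤ 1 ∧ x = π n * a) :
    ∀ f : maxIdealSubmodule v →ₗ[v.integer] (K ⧸ maxIdealSubmodule v),
      ∃ g : maxIdealSubmodule v →ₗ[v.integer] K,
        (maxIdealSubmodule v).mkQ ∘ₗ g = f := by
  intro f
  have hp1 : 1 ≤ p := hp.one_le
  have hp2 : 1 ≤ p - 1 := by have := hp.two_le; omega
  have hmemI : ∀ x : K, x ∈ maxIdealSubmodule v ↔ v x < 1 := fun x => Iff.rfl
  have hπv : ∀ n, (v (π (n+1)))^p = v (π n) := fun n => by rw [← map_pow, hπp]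
  have hpos : ∀ n, 0 < v (π n) := by
    intro n; induction n with
    | zero => exact hπ0
    | succ n ih =>
      rcases eq_or_lt_of_le (zero_le : 0 ≤ v (π (n+1))) with h | h
      · rw [← hπv n, ← h, zero_pow hp.ne_zero] at ih; exact absurd ih (lt_irrefl 0)
      · exact h
  have hlt1 : ∀ n, v (π n) < 1 := by
    intro n; induction n with
    | zero => exact hπ1
    | succ n ih => exact (pow_lt_one_iff hp.ne_zero).mp (by rw [hπv]; exact ih)
  have hne : ∀ n, π n ≠ 0 := fun n => v.ne_zero_iff.mp (hpos n).ne'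
  have hπmem : ∀ n, π n ∈ maxIdealSubmodule v := fun n => hlt1 n
  have vstep : ∀ n, v (π n) ≤ v (π (n+1)) := by
    intro n
    rw [← hπv n]
    calc (v (π (n+1)))^p ≤ (v (π (n+1)))^1 :=
          pow_le_pow_right_of_le_one' (hπint (n+1)) hp1
      _ = v (π (n+1)) := pow_one _
  have vmono : ∀ {n m : ℕ}, n ≤ m → v (π n) ≤ v (π m) := by
    intro n m h
    induction h with
    | refl => exact le_refl _
    | step h ih => exact le_trans ih (vstep _)
  choose b hb using fun n =>
    Submodule.Quotient.mk_surjective (maxIdealSubmodule v) (f ⟨π n, hπmem n⟩)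
  have hpowmem : ∀ n, π (n+1) ^ (p-1) ∈ v.integer := fun n => by
    rw [Valuation.mem_integer_iff, map_pow]; exact pow_le_one' (hπint (n+1)) _
  have hcomp : ∀ n, v (b n - π (n+1) ^ (p-1) * b (n+1)) < 1 := by
    intro n
    have hsm : (⟨π n, hπmem n⟩ : maxIdealSubmodule v) =
        (⟨π (n+1) ^ (p-1), hpowmem n⟩ : v.integer) • (⟨π (n+1), hπmem (n+1)⟩ : maxIdealSubmodule v) := by
      apply Subtype.ext
      show π n = π (n+1) ^ (p-1) * π (n+1)
      rw [← pow_succ, Nat.sub_add_cancel hp1, hπp]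
    have h1 := hb n
    rw [hsm, map_smul, ← hb (n+1), ← Submodule.Quotient.mk_smul] at h1
    have h2 := (Submodule.Quotient.eq (maxIdealSubmodule v)).mp h1
    simpa [Subring.smul_def, hmemI] using h2
  set ε : ℕ → K := fun n => b n - π (n+1) ^ (p-1) * b (n+1) with hεdef
  choose k aε haε hεeq using fun n => (hπm (ε n)).mp (hcomp n)
  have hvε : ∀ n, v (ε n) ≤ v (π (k n)) := fun n => by
    rw [hεeq n, map_mul]
    exact mul_le_of_le_one_right zero_le (haε n)
  set t : ℕ → K := fun n => ∏ i ∈ Finset.range n, π (i+1) ^ (p-1) with htdef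
  have htsucc : ∀ n, t (n+1) = t n * π (n+1) ^ (p-1) := fun n => Finset.prod_range_succ _ _
  have htne : ∀ n, t n ≠ 0 := by
    intro n
    apply Finset.prod_ne_zero_iff.mpr
    intro i _
    exact pow_ne_zero _ (hne (i+1))
  have vtne : ∀ n, v (t n) ≠ 0 := fun n => v.ne_zero_iff.mpr (htne n)
  have htπ : ∀ n, π n * t n = π 0 := by
    intro n; induction n with
    | zero => simp [htdef]
    | succ n ih =>
      rw [htsucc]
      calc π (n+1) * (t n * π (n+1) ^ (p-1))
          = (π (n+1) ^ (p-1) * π (n+1)) * t n := by ring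
        _ = π n * t n := by rw [← pow_succ, Nat.sub_add_cancel hp1, hπp]
        _ = π 0 := ih
  set M : ℕ → ℕ := fun n => max (k n) (n+1) with hMdef
  set C : ℕ → K := fun n => t n * b n with hCdef
  set r : ℕ → NNReal := fun n => v (t n) * v (π (M n)) with hrdef
  set B : ℕ → Set K := fun n => {x : K | v (x - C n) ≤ r n} with hBdef
  have hrle : ∀ n, r (n+1) ≤ r n := by
    intro n
    calc r (n+1) = v (t (n+1)) * v (π (M (n+1))) := rfl
      _ ≤ v (t (n+1)) * 1 := mul_le_mul_right (hπint _) _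
      _ = v (t n) * (v (π (n+1)))^(p-1) := by rw [mul_one, htsucc, map_mul, map_pow]
      _ ≤ v (t n) * (v (π (n+1)))^1 :=
          mul_le_mul_right (pow_le_pow_right_of_le_one' (hπint (n+1)) hp2) _
      _ = v (t n) * v (π (n+1)) := by rw [pow_one]
      _ ≤ v (t n) * v (π (M n)) := mul_le_mul_right (vmono (le_max_right _ _)) _
  have hCdist : ∀ n, v (C (n+1) - C n) ≤ r n := by
    intro n
    have hCe : C (n+1) - C n = t n * (-ε n) := by
      simp only [hCdef, hεdef]
      rw [htsucc]; ring
    rw [hCe, map_mul, v.map_neg]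
    exact mul_le_mul_right (le_trans (hvε n) (vmono (le_max_left _ _))) _
  have hstep : ∀ n, B (n+1) ⊆ B n := by
    intro n x hx
    have hx' : v (x - C (n+1)) ≤ r (n+1) := hx
    show v (x - C n) ≤ r n
    have : x - C n = (x - C (n+1)) + (C (n+1) - C n) := by ring
    rw [this]
    exact le_trans (v.map_add _ _)
      (max_le (le_trans hx' (hrle n)) (hCdist n))
  have hmono : ∀ n m, n ≤ m → B m ⊆ B n := by
    intro n m h
    induction h with
    | refl => exact subset_rfl
    | step h ih => exact fun x hx => ih (hstep _ hx)
  have hchain : IsChain (· ⊆ ·) (Set.range B) := by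
    rintro _ ⟨i, rfl⟩ _ ⟨j, rfl⟩ _
    rcases le_total i j with h | h
    · exact Or.inr (hmono i j h)
    · exact Or.inl (hmono j i h)
  have hballs : ∀ S ∈ Set.range B, ∃ (c : K) (ρ : NNReal), S = {x : K | v (x - c) ≤ ρ} := by
    rintro _ ⟨n, rfl⟩
    exact ⟨C n, r n, rfl⟩
  obtain ⟨c0, hc0⟩ := hsc (Set.range B) hballs hchain
  have hc0n : ∀ n, v (c0 - C n) ≤ r n := fun n => hc0 (B n) ⟨n, rfl⟩
  have hkey : ∀ n, v (c0 / π 0 * π n - b n) ≤ v (π (M n)) := by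
    intro n
    have he : c0 / π 0 * π n - b n = (c0 - C n) / t n := by
      rw [← htπ n, hCdef]
      field_simp [hne n, htne n]
    rw [he, v.map_div]
    rw [div_le_iff₀ (vtne n).bot_lt]
    calc v (c0 - C n) ≤ r n := hc0n n
      _ = v (π (M n)) * v (t n) := by rw [hrdef]; ring
  refine ⟨{ toFun := fun x => c0 / π 0 * (x : K),
            map_add' := fun x y => by push_cast; ring,
            map_smul' := fun c x => by
              simp only [RingHom.id_apply, SetLike.val_smul, Subring.smul_def,
                smul_eq_mul]
              ring }, ?_⟩
  apply LinearMap.ext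
  rintro ⟨x, hx⟩
  obtain ⟨n, a, hva, rfl⟩ := (hπm x).mp hx
  have hxeq : (⟨π n * a, hx⟩ : maxIdealSubmodule v) =
      (⟨a, hva⟩ : v.integer) • (⟨π n, hπmem n⟩ : maxIdealSubmodule v) := by
    apply Subtype.ext
    show π n * a = (⟨a, hva⟩ : v.integer) • π n
    rw [Subring.smul_def]
    simp only [smul_eq_mul]
    ring
  have hrhs : f ⟨π n * a, hx⟩ = Submodule.Quotient.mk (a * b n) := by
    rw [hxeq, map_smul, ← hb n, ← Submodule.Quotient.mk_smul]
    congr 1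
  show Submodule.Quotient.mk (c0 / π 0 * (π n * a)) = f ⟨π n * a, hx⟩
  rw [hrhs]
  rw [Submodule.Quotient.eq]
  show v (c0 / π 0 * (π n * a) - a * b n) < 1
  have hd : c0 / π 0 * (π n * a) - a * b n = a * (c0 / π 0 * π n - b n) := by ring
  rw [hd, map_mul]
  calc v a * v (c0 / π 0 * π n - b n) ≤ 1 * v (π (M n)) :=
        mul_le_mul' hva (hkey n)
    _ = v (π (M n)) := one_mul _
    _ < 1 := hlt1 (M n)
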